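/- arXiv:1312.5050 — 2 statements merged into one kernel-verified Lean document; each statement's English description precedes it below -/
import Mathlib

section
/- Let n ≥ 1, let a : Fin n → ℕ be a count vector with total sum w = ∑_j a_j satisfying w ≥ 1, and let k : Fin n be a coordinate with a_k = 0. Let e_k denote the unit count vector with value 1 at position k and 0 elsewhere. Then the increase in Shannon entropy satisfies the quantitative lower bound H(a + e_k) − H(a) ≥ ln((w+1)/w). (This is the quantitative estimate established in the proof of the paper's Proposition 2, obtained by combining the update identity for H(a + e_k) with the bound H(a) ≤ ln w.) -/
open Real Finset

/-- Shannon entropy of a count vector `a : Fin n → ℕ` with total sum `∑ i, a i`: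
`H(a) = -∑ j, (a j / w) * ln (a j / w)` where `w = ∑ i, a i`.
(Terms with `a j = 0` contribute `0` since `Real.log 0 = 0`.) -/
noncomputable def countEntropy {n : ℕ} (a : Fin n → ℕ) : ℝ :=
  -∑ j, ((a j : ℝ) / (∑ i, a i : ℕ)) * Real.log ((a j : ℝ) / (∑ i, a i : ℕ))

lemma countEntropy_le_log {n : ℕ} (a : Fin n → ℕ) (w : ℕ) (hw : w = ∑ j, a j)
    (hw1 : 1 ≤ w) : countEntropy a ≤ Real.log w := by
  have hwpos : (0:ℝ) < (w:ℝ) := by exact_mod_cast hw1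
  have hsum : ((∑ i, a i : ℕ) : ℝ) = (w : ℝ) := by exact_mod_cast hw.symm
  have key : ∀ j, -(((a j : ℝ)/(w:ℝ)) * Real.log ((a j : ℝ)/(w:ℝ)))
      ≤ ((a j : ℝ)/(w:ℝ)) * Real.log w := by
    intro j
    rcases Nat.eq_zero_or_pos (a j) with h | h
    · simp [h]
    · have hc : (1:ℝ) ≤ (a j : ℝ) := by exact_mod_cast h
      have hp : 0 < (a j : ℝ)/(w:ℝ) := by positivity
      rw [neg_mul_eq_mul_neg, ← Real.log_inv]
      apply mul_le_mul_of_nonneg_left _ hp.le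
      rw [inv_div]
      apply Real.log_le_log (by positivity)
      rw [div_le_iff₀ (by linarith)]
      nlinarith
  calc countEntropy a = ∑ j, -(((a j : ℝ)/(w:ℝ)) * Real.log ((a j : ℝ)/(w:ℝ))) := by
        rw [countEntropy, hsum, Finset.sum_neg_distrib]
    _ ≤ ∑ j, ((a j : ℝ)/(w:ℝ)) * Real.log w := Finset.sum_le_sum (fun j _ => key j)
    _ = Real.log w := by
        rw [← Finset.sum_mul, ← Finset.sum_div]
        rw [show (∑ j, (a j : ℝ)) = ((∑ j, a j : ℕ) : ℝ) by push_cast; rfl]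
        rw [← hw, div_self hwpos.ne', one_mul]

/-- when a previously unwatched coordinate `k` (i.e. `a k = 0`)
receives one additional view, the entropy increases by at least
`ln ((w+1)/w)`. -/
theorem entropy_increase_lower_bound (n : ℕ) (hn : 1 ≤ n) (a : Fin n → ℕ)
    (w : ℕ) (hw : w = ∑ j, a j) (hw1 : 1 ≤ w) (k : Fin n) (hk : a k = 0) :
    countEntropy (a + Pi.single k 1) - countEntropy a ≥
      Real.log (((w : ℝ) + 1) / w) := by
  have hwpos : (0:ℝ) < (w:ℝ) := by exact_mod_cast hw1
  set W : ℝ := (w:ℝ) with hWdef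
  have hW1 : (0:ℝ) < W + 1 := by linarith
  set b : Fin n → ℕ := a + Pi.single k 1 with hbdef
  have hbk : b k = 1 := by simp [hbdef, hk]
  have hbj : ∀ j, j ≠ k → b j = a j := by
    intro j hj; simp [hbdef, Pi.single_apply, hj]
  have hbsum : (∑ j, b j) = w + 1 := by
    simp [hbdef, Finset.sum_add_distrib, ← hw, Finset.sum_pi_single']
  have hcast : ((∑ j, b j : ℕ) : ℝ) = W + 1 := by rw [hbsum]; push_cast; rfl
  have hacast : ((∑ i, a i : ℕ) : ℝ) = W := by rw [hWdef]; exact_mod_cast hw.symm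
  have hH : countEntropy a ≤ Real.log W := countEntropy_le_log a w hw hw1
  set H := countEntropy a with hHdef
  -- the k-term of the a-sum vanishes
  have hk0 : ((a k : ℝ)/(W+1)) * Real.log ((a k : ℝ)/(W+1)) = 0 := by
    simp [hk]
  -- split the b-sum at k
  have hsplit : ∑ j, ((b j : ℝ)/(W+1)) * Real.log ((b j : ℝ)/(W+1))
      = (1/(W+1)) * Real.log (1/(W+1))
        + ∑ j, ((a j : ℝ)/(W+1)) * Real.log ((a j : ℝ)/(W+1)) := by
    rw [← Finset.add_sum_erase _ _ (Finset.mem_univ k), hbk]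
    have h1 : ∑ j ∈ univ.erase k, ((b j : ℝ)/(W+1)) * Real.log ((b j : ℝ)/(W+1))
        = ∑ j ∈ univ.erase k, ((a j : ℝ)/(W+1)) * Real.log ((a j : ℝ)/(W+1)) :=
      Finset.sum_congr rfl (fun j hj => by rw [hbj j (Finset.ne_of_mem_erase hj)])
    rw [h1, Finset.sum_erase (f := fun j => ((a j : ℝ)/(W+1)) * Real.log ((a j : ℝ)/(W+1))) _ hk0]
    norm_num
  -- termwise identity
  have hterm : ∀ j, ((a j : ℝ)/(W+1)) * Real.log ((a j : ℝ)/(W+1))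
      = (W/(W+1)) * (((a j : ℝ)/W) * Real.log ((a j : ℝ)/W))
        + ((a j : ℝ)/(W+1)) * (Real.log W - Real.log (W+1)) := by
    intro j
    rcases Nat.eq_zero_or_pos (a j) with h | h
    · simp [h]
    · have hc : (0:ℝ) < (a j : ℝ) := by exact_mod_cast h
      rw [Real.log_div hc.ne' hW1.ne', Real.log_div hc.ne' hwpos.ne']
      field_simp
      ring
  have hsum1 : ∑ j, ((a j : ℝ)/(W+1)) = W/(W+1) := by
    rw [← Finset.sum_div]
    rw [show (∑ j, (a j : ℝ)) = ((∑ j, a j : ℕ) : ℝ) by push_cast; rfl]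
    rw [← hw]
  have hsumid : ∑ j, ((a j : ℝ)/(W+1)) * Real.log ((a j : ℝ)/(W+1))
      = (W/(W+1)) * (-H) + (Real.log W - Real.log (W+1)) * (W/(W+1)) := by
    rw [Finset.sum_congr rfl (fun j _ => hterm j), Finset.sum_add_distrib,
      ← Finset.mul_sum, ← Finset.sum_mul, hsum1]
    congr 1
    · congr 1
      rw [hHdef, countEntropy, hacast, neg_neg]
    · ring
  have hb_entropy : countEntropy b
      = -((1/(W+1)) * Real.log (1/(W+1))
          + ((W/(W+1)) * (-H) + (Real.log W - Real.log (W+1)) * (W/(W+1)))) := by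
    rw [countEntropy, hcast, hsplit, hsumid]
  rw [ge_iff_le, ← sub_nonneg]
  have hlog1 : Real.log (1/(W+1)) = -Real.log (W+1) := by
    rw [one_div, Real.log_inv]
  have hlogdiv : Real.log ((W+1)/W) = Real.log (W+1) - Real.log W :=
    Real.log_div hW1.ne' hwpos.ne'
  have heq : countEntropy b - H - Real.log ((W+1)/W)
      = (Real.log W - H)/(W+1) := by
    rw [hb_entropy, hlog1, hlogdiv]
    field_simp
    ring
  rw [heq]
  exact div_nonneg (by linarith) hW1.le
end

section
/- Let n ≥ 1, let a : Fin n → ℕ be a count vector with total sum w = ∑_j a_j satisfying w ≥ 1, and let k : Fin n be a coordinate with a_k = 0. Let e_k denote the unit count vector with value 1 at position k and 0 elsewhere. Then H(a + e_k) > H(a), i.e. the Shannon entropy strictly increases. (This is the paper's Proposition 2: as an IP's view count increases, whenever the incremental view is for a previously unwatched video — so that it increases the number of watched videos — the IP entropy strictly increases.) -/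
open Real Finset

lemma countEntropy_eq {n : ℕ} (a : Fin n → ℕ) (w : ℕ) (hw : (w:ℝ) = ∑ j, (a j : ℝ))
    (hw1 : 1 ≤ w) :
    countEntropy a = Real.log w - (∑ j, (a j : ℝ) * Real.log (a j)) / w := by
  have hwpos : (0:ℝ) < w := by exact_mod_cast hw1
  have hsum : ((∑ i, a i : ℕ) : ℝ) = (w:ℝ) := by push_cast; rw [hw]
  unfold countEntropy
  rw [hsum]
  have h : ∀ j ∈ Finset.univ, ((a j : ℝ) / w) * Real.log ((a j : ℝ) / w)
      = ((a j : ℝ) * Real.log (a j)) / w - ((a j : ℝ) / w) * Real.log w := by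
    intro j _
    by_cases hj : a j = 0
    · simp [hj]
    · rw [Real.log_div (by exact_mod_cast hj) (ne_of_gt hwpos)]
      ring
  rw [Finset.sum_congr rfl h, Finset.sum_sub_distrib, ← Finset.sum_div,
    ← Finset.sum_mul, ← Finset.sum_div, ← hw]
  field_simp
  ring

/-- Proposition 2: when an incremental view goes to a previously
unwatched coordinate `k` (i.e. `a k = 0`), the entropy strictly increases. -/
theorem entropy_strict_increase (n : ℕ) (hn : 1 ≤ n) (a : Fin n → ℕ)
    (w : ℕ) (hw : w = ∑ j, a j) (hw1 : 1 ≤ w) (k : Fin n) (hk : a k = 0) :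
    countEntropy (a + Pi.single k 1) > countEntropy a := by
  set b := a + Pi.single k 1 with hb
  have hwr : (w:ℝ) = ∑ j, (a j : ℝ) := by rw [hw]; push_cast; ring
  have hbsum : ((w+1 : ℕ):ℝ) = ∑ j, (b j : ℝ) := by
    push_cast
    have : ∀ j, (b j : ℝ) = (a j : ℝ) + (((Pi.single k 1 : Fin n → ℕ) j : ℕ) : ℝ) := by
      intro j; simp [hb]
    rw [Finset.sum_congr rfl (fun j _ => this j), Finset.sum_add_distrib,
      ← hwr]
    simp [Pi.single_apply, Finset.sum_ite_eq']
  have hS : (∑ j, (b j : ℝ) * Real.log (b j)) = ∑ j, (a j : ℝ) * Real.log (a j) := by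
    apply Finset.sum_congr rfl
    intro j _
    by_cases hj : j = k
    · subst hj; simp [hb, hk]
    · simp [hb, Pi.single_apply, hj]
  rw [countEntropy_eq a w hwr hw1, countEntropy_eq b (w+1) hbsum (by omega), hS]
  set S := ∑ j, (a j : ℝ) * Real.log (a j) with hSdef
  have hSnn : 0 ≤ S := by
    apply Finset.sum_nonneg
    intro j _
    rcases Nat.eq_zero_or_pos (a j) with h | h
    · simp [h]
    · exact mul_nonneg (by positivity) (Real.log_natCast_nonneg _)
  have hwpos : (0:ℝ) < w := by exact_mod_cast hw1
  have hlog : Real.log w < Real.log (w+1) := by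
    apply Real.log_lt_log hwpos
    push_cast; linarith
  have hdiv : S / ((w+1:ℕ):ℝ) ≤ S / (w:ℝ) := by
    apply div_le_div_of_nonneg_left hSnn hwpos
    push_cast; linarith
  push_cast at hdiv hlog ⊢
  linarith
end
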